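/- Let α,β>0 be real with (αq;q)_m≠0 for all m≥0. Then for all integers n≥0 and j≥0: ∑_{x=0}^{j} (−1)^x q^{x(x−1)/2} · φ_n(x)/((q;q)_x (q;q)_{j−x}) = ((αβq^{n+1};q)_j/((αq;q)_j (q;q)_j)) · q^{−n²/2} (q;q)_n, where φ_n(x)=q^{−n²/2}(q;q)_n(αβq^{n+1})^x(β^{−1}q^{−n};q)_x/(αq;q)_x for all integers x≥0 (this is Q_n(x;α,β,n|q), extended by the same formula to all x≥0), and q^{−n²/2} denotes the real power of q. -/

import Mathlib

open Finset

noncomputable section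

/-- q-shifted factorial `(a;q)_m`. -/
def qPoch (q a : ℝ) (m : ℕ) : ℝ := ∏ k ∈ Finset.range m, (1 - a * q ^ k)

/-- `φ_n(x) = Q_n(x; a, b, n | q)`, extended by the same formula to all `x ≥ 0`. -/
def phiR (q a b : ℝ) (n : ℕ) : ℕ → ℝ := fun x =>
  q ^ (-((n : ℝ) ^ 2) / 2) * qPoch q q n * (a * b * q ^ (n + 1)) ^ x *
    qPoch q (b⁻¹ * q ^ (-(n : ℤ))) x / qPoch q (a * q) x


lemma qPoch_zero (q a : ℝ) : qPoch q a 0 = 1 := rfl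

lemma qPoch_succ (q a : ℝ) (m : ℕ) :
    qPoch q a (m + 1) = qPoch q a m * (1 - a * q ^ m) := Finset.prod_range_succ _ _

lemma qPoch_add (q a : ℝ) (m k : ℕ) :
    qPoch q a (m + k) = qPoch q a m * qPoch q (a * q ^ m) k := by
  rw [qPoch, Finset.prod_range_add]
  congr 1
  apply Finset.prod_congr rfl
  intro i _
  rw [pow_add]; ring

lemma qq_pos {q : ℝ} (hq0 : 0 < q) (hq1 : q < 1) (m : ℕ) : 0 < qPoch q q m := by
  apply Finset.prod_pos
  intro k _
  have h1 : q ^ (k + 1) < 1 := pow_lt_one₀ hq0.le hq1 (by omega)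
  have h2 : q * q ^ k = q ^ (k + 1) := by ring
  nlinarith

lemma qq_ne {q : ℝ} (hq0 : 0 < q) (hq1 : q < 1) (m : ℕ) : qPoch q q m ≠ 0 :=
  (qq_pos hq0 hq1 m).ne'

def gb (q : ℝ) : ℕ → ℕ → ℝ
  | 0, 0 => 1
  | 0, _ + 1 => 0
  | _ + 1, 0 => 1
  | j + 1, x + 1 => gb q j (x + 1) + q ^ (j - x) * gb q j x

lemma gb_zero' (q : ℝ) : ∀ j x : ℕ, j < x → gb q j x = 0 := by
  intro j
  induction j with
  | zero => intro x hx; match x, hx with | x + 1, _ => rfl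
  | succ j ih =>
    intro x hx
    match x, hx with
    | x + 1, hx =>
      show gb q j (x + 1) + q ^ (j - x) * gb q j x = 0
      rw [ih (x + 1) (by omega), ih x (by omega)]
      ring

lemma gb_zero_left (q : ℝ) (j : ℕ) : gb q j 0 = 1 := by
  cases j <;> rfl

lemma gb_eq {q : ℝ} (hq0 : 0 < q) (hq1 : q < 1) :
    ∀ j x : ℕ, x ≤ j → gb q j x = qPoch q q j / (qPoch q q x * qPoch q q (j - x)) := by
  intro j
  induction j with
  | zero =>
    intro x hx
    interval_cases x
    simp [gb, qPoch]
  | succ j ih =>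
    intro x hx
    match x with
    | 0 =>
      rw [gb_zero_left]
      simp [qPoch_zero]
      rw [div_self (qq_ne hq0 hq1 _)]
    | x + 1 =>
      show gb q j (x + 1) + q ^ (j - x) * gb q j x = _
      rcases Nat.lt_or_ge x j with hlt | hge
      · -- x + 1 ≤ j
        obtain ⟨e, rfl⟩ : ∃ e, j = x + 1 + e := ⟨j - (x + 1), by omega⟩
        rw [ih (x + 1) (by omega), ih x (by omega)]
        have h1 : x + 1 + e - (x + 1) = e := by omega
        have h2 : x + 1 + e - x = e + 1 := by omega
        have h3 : x + 1 + e + 1 - (x + 1) = e + 1 := by omega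
        rw [h1, h2, h3]
        have hx1 : qPoch q q (x + 1) = qPoch q q x * (1 - q * q ^ x) := qPoch_succ _ _ _
        have he1 : qPoch q q (e + 1) = qPoch q q e * (1 - q * q ^ e) := qPoch_succ _ _ _
        have hj1 : qPoch q q (x + 1 + e + 1) = qPoch q q (x + 1 + e) * (1 - q * q ^ (x + 1 + e)) :=
          qPoch_succ _ _ _
        rw [hx1, he1, hj1]
        have n1 := qq_ne hq0 hq1 x
        have n2 := qq_ne hq0 hq1 e
        have n3 := qq_ne hq0 hq1 (x + 1 + e)
        have n4 : (1 : ℝ) - q * q ^ x ≠ 0 := by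
          have := qq_pos hq0 hq1 (x + 1); rw [hx1] at this
          intro h; rw [h, mul_zero] at this; exact lt_irrefl 0 this
        have n5 : (1 : ℝ) - q * q ^ e ≠ 0 := by
          have := qq_pos hq0 hq1 (e + 1); rw [he1] at this
          intro h; rw [h, mul_zero] at this; exact lt_irrefl 0 this
        field_simp
        ring
      · -- x = j
        have : x = j := by omega
        subst this
        rw [gb_zero' q x (x + 1) (by omega), ih x le_rfl]
        simp only [Nat.sub_self, qPoch_zero, mul_one, pow_zero]
        rw [div_self (qq_ne hq0 hq1 x), div_self (qq_ne hq0 hq1 (x + 1))]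
        ring

lemma key {q : ℝ} (hq0 : 0 < q) (hq1 : q < 1) :
    ∀ (j : ℕ) (a B : ℝ),
      ∑ x ∈ Finset.range (j + 1), gb q j x *
        (a ^ x * q ^ (x ^ 2) * qPoch q⁻¹ B x * qPoch q (a * q ^ (x + 1)) (j - x))
      = qPoch q (a * B * q) j := by
  have hqne : q ≠ 0 := hq0.ne'
  intro j
  induction j with
  | zero => intro a B; simp [gb, qPoch]
  | succ j ih =>
    intro a B
    rw [Finset.sum_range_succ']
    have hsplit : ∀ x ∈ Finset.range (j + 1),
        gb q (j + 1) (x + 1) *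
          (a ^ (x + 1) * q ^ ((x + 1) ^ 2) * qPoch q⁻¹ B (x + 1) *
            qPoch q (a * q ^ (x + 1 + 1)) (j + 1 - (x + 1)))
        = gb q j (x + 1) * (a ^ (x + 1) * q ^ ((x + 1) ^ 2) * qPoch q⁻¹ B (x + 1) *
            qPoch q (a * q ^ (x + 1 + 1)) (j + 1 - (x + 1)))
          + (a * q ^ (j + 1) * (1 - B)) *
            (gb q j x * ((a * q) ^ x * q ^ (x ^ 2) * qPoch q⁻¹ (B * q⁻¹) x *
              qPoch q ((a * q) * q ^ (x + 1)) (j - x))) := by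
      intro x hx
      rw [Finset.mem_range] at hx
      obtain ⟨d, rfl⟩ : ∃ d, j = x + d := ⟨j - x, by omega⟩
      show (gb q (x + d) (x + 1) + q ^ (x + d - x) * gb q (x + d) x) * _ = _
      have h1 : x + d - x = d := by omega
      have h2 : x + d + 1 - (x + 1) = d := by omega
      rw [h1, h2]
      have hP : qPoch q⁻¹ B (x + 1) = (1 - B) * qPoch q⁻¹ (B * q⁻¹) x := by
        have h := qPoch_add q⁻¹ B 1 x
        rw [show 1 + x = x + 1 by omega] at h
        rw [h]
        simp [qPoch_succ, qPoch_zero]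
      rw [hP]
      have hpow : (a * q) * q ^ (x + 1) = a * q ^ (x + 1 + 1) := by ring
      rw [hpow]
      ring
    rw [Finset.sum_congr rfl hsplit, Finset.sum_add_distrib, ← Finset.mul_sum]
    rw [ih (a * q) (B * q⁻¹)]
    have hB : a * q * (B * q⁻¹) * q = a * B * q := by field_simp
    rw [hB]
    have hre : (∑ x ∈ Finset.range (j + 1), gb q j (x + 1) *
          (a ^ (x + 1) * q ^ ((x + 1) ^ 2) * qPoch q⁻¹ B (x + 1) *
            qPoch q (a * q ^ (x + 1 + 1)) (j + 1 - (x + 1))))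
        + gb q (j + 1) 0 * (a ^ 0 * q ^ (0 ^ 2) * qPoch q⁻¹ B 0 *
            qPoch q (a * q ^ (0 + 1)) (j + 1 - 0))
        = ∑ x ∈ Finset.range (j + 1 + 1), gb q j x *
          (a ^ x * q ^ (x ^ 2) * qPoch q⁻¹ B x * qPoch q (a * q ^ (x + 1)) (j + 1 - x)) := by
      conv_rhs => rw [Finset.sum_range_succ']
      rw [gb_zero_left, gb_zero_left]
    have hfirst : (∑ x ∈ Finset.range (j + 1 + 1), gb q j x *
          (a ^ x * q ^ (x ^ 2) * qPoch q⁻¹ B x * qPoch q (a * q ^ (x + 1)) (j + 1 - x)))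
        = (1 - a * q ^ (j + 1)) * qPoch q (a * B * q) j := by
      rw [Finset.sum_range_succ, gb_zero' q j (j + 1) (by omega)]
      have hc : ∀ x ∈ Finset.range (j + 1),
          gb q j x * (a ^ x * q ^ (x ^ 2) * qPoch q⁻¹ B x *
            qPoch q (a * q ^ (x + 1)) (j + 1 - x))
          = (1 - a * q ^ (j + 1)) * (gb q j x * (a ^ x * q ^ (x ^ 2) * qPoch q⁻¹ B x *
              qPoch q (a * q ^ (x + 1)) (j - x))) := by
        intro x hx
        rw [Finset.mem_range] at hx
        obtain ⟨d, rfl⟩ : ∃ d, j = x + d := ⟨j - x, by omega⟩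
        have h1 : x + d + 1 - x = d + 1 := by omega
        have h2 : x + d - x = d := by omega
        rw [h1, h2, qPoch_succ]
        have h3 : a * q ^ (x + 1) * q ^ d = a * q ^ (x + d + 1) := by
          rw [pow_add, pow_add]; ring
        rw [h3]
        ring
      rw [Finset.sum_congr rfl hc, ← Finset.mul_sum, ih a B]
      ring
    rw [qPoch_succ]
    linear_combination hre + hfirst

lemma qtrans (q b aa : ℝ) (hq : q ≠ 0) (hb : b ≠ 0) (n x : ℕ) :
    (-1 : ℝ) ^ x * q ^ (x * (x - 1) / 2) *
      ((aa * b * q ^ (n + 1)) ^ x * qPoch q (b⁻¹ * q ^ (-(n : ℤ))) x)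
    = aa ^ x * q ^ (x ^ 2) * qPoch q⁻¹ (b * q ^ n) x := by
  have hsum : ∑ k ∈ Finset.range x, (2 * k + 1) = x ^ 2 := by
    induction x with
    | zero => rfl
    | succ m ihm => rw [Finset.sum_range_succ, ihm]; ring
  have e1 : (q : ℝ) ^ (x * (x - 1) / 2) = ∏ k ∈ Finset.range x, q ^ k := by
    rw [Finset.prod_pow_eq_pow_sum, Finset.sum_range_id]
  have e2 : (q : ℝ) ^ (x ^ 2) = ∏ k ∈ Finset.range x, q ^ (2 * k + 1) := by
    rw [Finset.prod_pow_eq_pow_sum, hsum]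
  rw [e1, e2, qPoch, qPoch,
    show ((-1 : ℝ)) ^ x = ∏ _k ∈ Finset.range x, (-1 : ℝ) by
      rw [Finset.prod_const, Finset.card_range],
    show (aa * b * q ^ (n + 1)) ^ x = ∏ _k ∈ Finset.range x, (aa * b * q ^ (n + 1)) by
      rw [Finset.prod_const, Finset.card_range],
    show aa ^ x = ∏ _k ∈ Finset.range x, aa by
      rw [Finset.prod_const, Finset.card_range]]
  simp only [← Finset.prod_mul_distrib]
  apply Finset.prod_congr rfl
  intro k _
  have hzp : (q : ℝ) ^ (-(n : ℤ)) = (q ^ n)⁻¹ := by rw [zpow_neg, zpow_natCast]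
  rw [hzp]
  have hqn : (q : ℝ) ^ n ≠ 0 := pow_ne_zero _ hq
  have hqk : (q : ℝ) ^ k ≠ 0 := pow_ne_zero _ hq
  rw [inv_pow]
  field_simp
  ring

theorem stmt13 (q : ℝ) (hq0 : 0 < q) (hq1 : q < 1) (a b : ℝ) (ha : 0 < a) (hb : 0 < b)
    (hpoch : ∀ m : ℕ, qPoch q (a * q) m ≠ 0) (n j : ℕ) :
    ∑ x ∈ Finset.range (j + 1),
      (-1 : ℝ) ^ x * q ^ (x * (x - 1) / 2) * phiR q a b n x /
        (qPoch q q x * qPoch q q (j - x)) =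
      qPoch q (a * b * q ^ (n + 1)) j / (qPoch q (a * q) j * qPoch q q j) *
        (q ^ (-((n : ℝ) ^ 2) / 2) * qPoch q q n) := by
  have hqne : q ≠ 0 := hq0.ne'
  have hterm : ∀ x ∈ Finset.range (j + 1),
      (-1 : ℝ) ^ x * q ^ (x * (x - 1) / 2) * phiR q a b n x /
        (qPoch q q x * qPoch q q (j - x))
      = (q ^ (-((n : ℝ) ^ 2) / 2) * qPoch q q n / (qPoch q q j * qPoch q (a * q) j)) *
          (gb q j x * (a ^ x * q ^ (x ^ 2) * qPoch q⁻¹ (b * q ^ n) x *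
            qPoch q (a * q ^ (x + 1)) (j - x))) := by
    intro x hx
    rw [Finset.mem_range] at hx
    have hx' : x ≤ j := by omega
    have hsplitP : qPoch q (a * q) j = qPoch q (a * q) x * qPoch q (a * q ^ (x + 1)) (j - x) := by
      have h := qPoch_add q (a * q) x (j - x)
      rw [show x + (j - x) = j by omega] at h
      rw [h]
      congr 2
      rw [pow_succ]
      ring
    have hgb := gb_eq hq0 hq1 j x hx'
    have htr := qtrans q b a hqne hb.ne' n x
    have nQx := qq_ne hq0 hq1 x
    have nQjx := qq_ne hq0 hq1 (j - x)
    have nQj := qq_ne hq0 hq1 j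
    have nPx := hpoch x
    have nP2 : qPoch q (a * q ^ (x + 1)) (j - x) ≠ 0 := by
      intro h
      apply hpoch j
      rw [hsplitP, h, mul_zero]
    calc (-1 : ℝ) ^ x * q ^ (x * (x - 1) / 2) * phiR q a b n x /
          (qPoch q q x * qPoch q q (j - x))
        = ((-1 : ℝ) ^ x * q ^ (x * (x - 1) / 2) *
            ((a * b * q ^ (n + 1)) ^ x * qPoch q (b⁻¹ * q ^ (-(n : ℤ))) x)) *
            (q ^ (-((n : ℝ) ^ 2) / 2) * qPoch q q n) /
            (qPoch q (a * q) x * (qPoch q q x * qPoch q q (j - x))) := by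
          rw [phiR]
          ring
      _ = (a ^ x * q ^ (x ^ 2) * qPoch q⁻¹ (b * q ^ n) x) *
            (q ^ (-((n : ℝ) ^ 2) / 2) * qPoch q q n) /
            (qPoch q (a * q) x * (qPoch q q x * qPoch q q (j - x))) := by
          rw [htr]
      _ = (q ^ (-((n : ℝ) ^ 2) / 2) * qPoch q q n / (qPoch q q j * qPoch q (a * q) j)) *
          (gb q j x * (a ^ x * q ^ (x ^ 2) * qPoch q⁻¹ (b * q ^ n) x *
            qPoch q (a * q ^ (x + 1)) (j - x))) := by
          rw [hgb, hsplitP]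
          field_simp
  rw [Finset.sum_congr rfl hterm, ← Finset.mul_sum, key hq0 hq1 j a (b * q ^ n)]
  rw [show a * (b * q ^ n) * q = a * b * q ^ (n + 1) by rw [pow_succ]; ring]
  field_simp
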